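/- Let f : ℝ → ℝ be C² with, on an interval (0,a): f > 0, f' ≥ 0, f'' ≥ 0, f − t f' > 0, 1 + f² − t² − 2 t f f' > 0, and suppose at t = 0 one has f'(0) = 0 so that (1 + f² − t² − 2 t f f')(f − t f') / (f(1+(f')²)(1+t²+f²)) evaluates to 1 at t = 0. If additionally f(a) − a f'(a) = 0, then the quantity Q(t) = (1 + f² − t² − 2 t f f')(f − t f')/(f(1+(f')²)(1+t²+f²)) satisfies Q(0) = 1, Q(a) = 0, and Q is non-increasing on [0,a] (hence 0 ≤ Q ≤ 1 on [0,a]). -/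

import Mathlib

/-- The pinching quantity Q(t) = (1+f²-t²-2tff')(f-tf')/(f(1+(f')²)(1+t²+f²))
satisfies Q(0) = 1, Q(a) = 0 and is non-increasing on [0,a]; hence 0 ≤ Q ≤ 1. -/
theorem pinching_quantity_monotone (f : ℝ → ℝ) (a : ℝ) (ha : 0 < a)
    (hf : ContDiff ℝ 2 f) (hf0 : 0 < f 0) (hf'0 : deriv f 0 = 0)
    (hfpos : ∀ t ∈ Set.Ioo 0 a, 0 < f t)
    (hf' : ∀ t ∈ Set.Ioo 0 a, 0 ≤ deriv f t)
    (hf'' : ∀ t ∈ Set.Ioo 0 a, 0 ≤ deriv (deriv f) t)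
    (hsupp : ∀ t ∈ Set.Ioo 0 a, 0 < f t - t * deriv f t)
    (hnum : ∀ t ∈ Set.Ioo 0 a, 0 < 1 + f t ^ 2 - t ^ 2 - 2 * t * f t * deriv f t)
    (hend : f a - a * deriv f a = 0) :
    let Q : ℝ → ℝ := fun t =>
      (1 + f t ^ 2 - t ^ 2 - 2 * t * f t * deriv f t) * (f t - t * deriv f t)
        / (f t * (1 + (deriv f t) ^ 2) * (1 + t ^ 2 + f t ^ 2))
    Q 0 = 1 ∧ Q a = 0 ∧ AntitoneOn Q (Set.Icc 0 a) ∧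
      ∀ t ∈ Set.Icc 0 a, 0 ≤ Q t ∧ Q t ≤ 1 := by
  intro Q
  -- differentiability facts
  have hd1 : Differentiable ℝ f := hf.differentiable (by norm_num)
  have hd2 : Differentiable ℝ (deriv f) := by
    have h : ContDiff ℝ (1+1) f := by norm_num; exact hf
    exact (contDiff_succ_iff_deriv.mp h).2.2.differentiable (by norm_num)
  have hc1 : Continuous f := hd1.continuous
  have hc2 : Continuous (deriv f) := hd2.continuous
  set N : ℝ → ℝ := fun t =>
    (1 + f t ^ 2 - t ^ 2 - 2 * t * f t * deriv f t) * (f t - t * deriv f t) with hNdef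
  set D : ℝ → ℝ := fun t => f t * (1 + (deriv f t) ^ 2) * (1 + t ^ 2 + f t ^ 2) with hDdef
  have hQ : ∀ t, Q t = N t / D t := fun t => rfl
  -- derivative of N
  have hN' : ∀ t : ℝ, HasDerivAt N
      ((-2 * t * (1 + (deriv f t) ^ 2 + f t * deriv (deriv f) t)) * (f t - t * deriv f t)
        + (1 + f t ^ 2 - t ^ 2 - 2 * t * f t * deriv f t) * (-(t * deriv (deriv f) t))) t := by
    intro t
    have h1 : HasDerivAt f (deriv f t) t := (hd1 t).hasDerivAt
    have h2 : HasDerivAt (deriv f) (deriv (deriv f) t) t := (hd2 t).hasDerivAt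
    have hA : HasDerivAt (fun s => 1 + f s ^ 2 - s ^ 2 - 2 * s * f s * deriv f s)
        (-2 * t * (1 + (deriv f t) ^ 2 + f t * deriv (deriv f) t)) t := by
      have := (((hasDerivAt_const t (1:ℝ)).add (h1.pow 2)).sub ((hasDerivAt_id t).pow 2)).sub
        ((((hasDerivAt_const t (2:ℝ)).mul (hasDerivAt_id t)).mul h1).mul h2)
      refine this.congr_deriv ?_
      simp; try ring
    have hB : HasDerivAt (fun s => f s - s * deriv f s) (-(t * deriv (deriv f) t)) t := by
      have := h1.sub ((hasDerivAt_id t).mul h2)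
      refine this.congr_deriv ?_
      simp; try ring
    exact hA.mul hB
  -- derivative of D
  have hD' : ∀ t : ℝ, HasDerivAt D
      ((deriv f t * (1 + (deriv f t) ^ 2)
          + f t * (2 * deriv f t * deriv (deriv f) t)) * (1 + t ^ 2 + f t ^ 2)
        + f t * (1 + (deriv f t) ^ 2) * (2 * t + 2 * f t * deriv f t)) t := by
    intro t
    have h1 : HasDerivAt f (deriv f t) t := (hd1 t).hasDerivAt
    have h2 : HasDerivAt (deriv f) (deriv (deriv f) t) t := (hd2 t).hasDerivAt
    have hP : HasDerivAt (fun s => f s * (1 + (deriv f s) ^ 2))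
        (deriv f t * (1 + (deriv f t) ^ 2) + f t * (2 * deriv f t * deriv (deriv f) t)) t := by
      have := h1.mul ((hasDerivAt_const t (1:ℝ)).add (h2.pow 2))
      refine this.congr_deriv ?_
      simp; try ring
    have hR : HasDerivAt (fun s => 1 + s ^ 2 + f s ^ 2) (2 * t + 2 * f t * deriv f t) t := by
      have := ((hasDerivAt_const t (1:ℝ)).add ((hasDerivAt_id t).pow 2)).add (h1.pow 2)
      refine this.congr_deriv ?_
      simp; try ring
    exact hP.mul hR
  have hNcont : Continuous N := by fun_prop
  have hDcont : Continuous D := by fun_prop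
  have hNdiff : Differentiable ℝ N := fun t => (hN' t).differentiableAt
  have hDdiff : Differentiable ℝ D := fun t => (hD' t).differentiableAt
  -- N is antitone on [0,a]
  have hMN : AntitoneOn N (Set.Icc 0 a) := by
    apply antitoneOn_of_deriv_nonpos (convex_Icc 0 a) hNcont.continuousOn
      (hNdiff.differentiableOn)
    intro t ht
    rw [interior_Icc] at ht
    rw [(hN' t).deriv]
    have h0 := hfpos t ht
    have h1 := hf' t ht
    have h2 := hf'' t ht
    have h3 := hsupp t ht
    have h4 := hnum t ht
    have htpos : 0 < t := ht.1
    have e1 : -2 * t * (1 + (deriv f t) ^ 2 + f t * deriv (deriv f) t) ≤ 0 := by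
      have hX : 0 ≤ 1 + (deriv f t) ^ 2 + f t * deriv (deriv f) t := by
        nlinarith [sq_nonneg (deriv f t), mul_nonneg h0.le h2]
      nlinarith [mul_nonneg htpos.le hX]
    have e2 : -(t * deriv (deriv f) t) ≤ 0 := by nlinarith
    nlinarith [mul_nonpos_of_nonpos_of_nonneg e1 h3.le, mul_nonpos_of_nonneg_of_nonpos h4.le e2]
  -- D is monotone on [0,a]
  have hMD : MonotoneOn D (Set.Icc 0 a) := by
    apply monotoneOn_of_deriv_nonneg (convex_Icc 0 a) hDcont.continuousOn
      (hDdiff.differentiableOn)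
    intro t ht
    rw [interior_Icc] at ht
    rw [(hD' t).deriv]
    have h0 := hfpos t ht
    have h1 := hf' t ht
    have h2 := hf'' t ht
    have htpos : 0 < t := ht.1
    have e1 : 0 ≤ deriv f t * (1 + (deriv f t) ^ 2) + f t * (2 * deriv f t * deriv (deriv f) t) := by
      nlinarith [mul_nonneg h1 (sq_nonneg (deriv f t)), mul_nonneg (mul_nonneg h0.le h1) h2]
    have e2 : (0:ℝ) < 1 + t ^ 2 + f t ^ 2 := by positivity
    have e3 : 0 ≤ 2 * t + 2 * f t * deriv f t := by nlinarith
    have e4 : 0 < f t * (1 + (deriv f t) ^ 2) := by positivity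
    nlinarith [mul_nonneg e1 e2.le, mul_nonneg e4.le e3]
  have h0mem : (0:ℝ) ∈ Set.Icc 0 a := ⟨le_rfl, ha.le⟩
  have hamem : a ∈ Set.Icc 0 a := ⟨ha.le, le_rfl⟩
  have hNa : N a = 0 := by
    show _ * (f a - a * deriv f a) = 0
    rw [hend, mul_zero]
  have hNnn : ∀ t ∈ Set.Icc 0 a, 0 ≤ N t := fun t ht => hNa ▸ hMN ht hamem ht.2
  have hDpos : ∀ t ∈ Set.Icc 0 a, 0 < D t := by
    intro t ht
    have hD0 : 0 < D 0 := by
      show 0 < f 0 * (1 + (deriv f 0) ^ 2) * (1 + 0 ^ 2 + f 0 ^ 2)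
      positivity
    exact lt_of_lt_of_le hD0 (hMD h0mem ht ht.1)
  -- Q antitone
  have hQanti : AntitoneOn Q (Set.Icc 0 a) := by
    intro x hx y hy hxy
    rw [hQ x, hQ y]
    exact div_le_div₀ (hNnn x hx) (hMN hx hy hxy) (hDpos x hx) (hMD hx hy hxy)
  have hQ0 : Q 0 = 1 := by
    show N 0 / D 0 = 1
    have hN0 : N 0 = (1 + f 0 ^ 2) * f 0 := by
      show (1 + f 0 ^ 2 - 0 ^ 2 - 2 * 0 * f 0 * deriv f 0) * (f 0 - 0 * deriv f 0) = _
      rw [hf'0]; ring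
    have hD0 : D 0 = f 0 * (1 + f 0 ^ 2) := by
      show f 0 * (1 + (deriv f 0) ^ 2) * (1 + 0 ^ 2 + f 0 ^ 2) = _
      rw [hf'0]; ring
    rw [hN0, hD0]
    have h1 : (0:ℝ) < 1 + f 0 ^ 2 := by positivity
    field_simp
  have hQa : Q a = 0 := by
    show N a / D a = 0
    rw [hNa, zero_div]
  refine ⟨hQ0, hQa, hQanti, fun t ht => ⟨?_, ?_⟩⟩
  · rw [← hQa]; exact hQanti ht hamem ht.2
  · rw [← hQ0]; exact hQanti h0mem ht ht.1
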